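/- arXiv:1501.02952 — 2 statements merged into one kernel-verified Lean document; each statement's English description precedes it below -/
import Mathlib

section
/- The function η is even and continuous on ℝ (in particular lim_{s→0} η(s) = b), is differentiable on (0,∞) with η'(s) < 0 for every s > 0, satisfies 0 < η(s) < b for all s ≠ 0, and η(s) → 0 as s → ∞. Consequently, the restriction of η to [0,∞) is a strictly decreasing bijection from [0,∞) onto (0, b]. -/
open Real Filter Topology Set

/-- The symbol `η(s) = sinh(s(π−2θ₀))/(2 sinh(sπ))` for `s ≠ 0`, with `η(0) = b = 1/2 − θ₀/π`. -/
noncomputable def eta (θ₀ : ℝ) (s : ℝ) : ℝ :=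
  if s = 0 then 1 / 2 - θ₀ / π
  else Real.sinh (s * (π - 2 * θ₀)) / (2 * Real.sinh (s * π))

lemma lemA {x : ℝ} (hx : 0 < x) : Real.sinh x < x * Real.cosh x := by
  have key : StrictMonoOn (fun t : ℝ => t * Real.cosh t - Real.sinh t) (Set.Ici 0) := by
    apply strictMonoOn_of_deriv_pos (convex_Ici 0)
    · exact ((continuous_id.mul Real.continuous_cosh).sub Real.continuous_sinh).continuousOn
    · intro t ht
      rw [interior_Ici] at ht
      have h1 : HasDerivAt (fun t : ℝ => t * Real.cosh t - Real.sinh t)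
          (1 * Real.cosh t + t * Real.sinh t - Real.cosh t) t :=
        ((hasDerivAt_id t).mul (Real.hasDerivAt_cosh t)).sub (Real.hasDerivAt_sinh t)
      rw [h1.deriv]
      have h2 := Real.sinh_pos_iff.mpr (Set.mem_Ioi.mp ht)
      nlinarith [mul_pos (Set.mem_Ioi.mp ht) h2]
  have h := key Set.self_mem_Ici (Set.mem_Ici.mpr hx.le) hx
  simp only [Real.cosh_zero, Real.sinh_zero, zero_mul, sub_zero, mul_zero] at h
  linarith

lemma lemD {u v : ℝ} (hu : 0 < u) (huv : u < v) : v * Real.sinh u < u * Real.sinh v := by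
  have key : StrictMonoOn (fun t : ℝ => u * Real.sinh t - t * Real.sinh u) (Set.Ici u) := by
    apply strictMonoOn_of_deriv_pos (convex_Ici u)
    · exact ((continuous_const.mul Real.continuous_sinh).sub
        (continuous_id.mul continuous_const)).continuousOn
    · intro t ht
      rw [interior_Ici] at ht
      have h1 : HasDerivAt (fun t : ℝ => u * Real.sinh t - t * Real.sinh u)
          (u * Real.cosh t - 1 * Real.sinh u) t :=
        ((Real.hasDerivAt_sinh t).const_mul u).sub ((hasDerivAt_id t).mul_const _)
      rw [h1.deriv]
      have h2 : Real.sinh u < u * Real.cosh u := lemA hu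
      have h3 : Real.cosh u < Real.cosh t := by
        rw [Real.cosh_lt_cosh, abs_of_pos hu, abs_of_pos (hu.trans ht)]
        exact ht
      nlinarith
  have h := key Set.self_mem_Ici (Set.mem_Ici.mpr huv.le) huv
  simp only at h
  nlinarith [h]

lemma lemC {u v : ℝ} (hu : 0 < u) (huv : u < v) :
    u * (Real.cosh u * Real.sinh v) < v * (Real.sinh u * Real.cosh v) := by
  have h := lemD (u := v - u) (v := v + u) (by linarith) (by linarith)
  rw [Real.sinh_sub, Real.sinh_add] at h
  nlinarith [h]

/-- `η` is even and continuous on `ℝ`, differentiable on `(0,∞)` with `η' < 0`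
there, satisfies `0 < η(s) < b` for all `s ≠ 0`, and `η(s) → 0` as `s → ∞`; consequently the
restriction of `η` to `[0,∞)` is a strictly decreasing bijection from `[0,∞)` onto `(0, b]`. -/
theorem statement5 (θ₀ : ℝ) (h0 : 0 < θ₀) (h1 : θ₀ < π / 2) :
    (∀ s : ℝ, eta θ₀ (-s) = eta θ₀ s) ∧
    Continuous (eta θ₀) ∧
    (∀ s : ℝ, 0 < s → DifferentiableAt ℝ (eta θ₀) s ∧ deriv (eta θ₀) s < 0) ∧
    (∀ s : ℝ, s ≠ 0 → 0 < eta θ₀ s ∧ eta θ₀ s < 1 / 2 - θ₀ / π) ∧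
    Tendsto (eta θ₀) atTop (𝓝 0) ∧
    StrictAntiOn (eta θ₀) (Ici 0) ∧
    BijOn (eta θ₀) (Ici 0) (Ioc 0 (1 / 2 - θ₀ / π)) := by
  have hπ : (0:ℝ) < π := Real.pi_pos
  set a : ℝ := π - 2 * θ₀ with ha_def
  have ha : 0 < a := by simp only [ha_def]; linarith
  have haπ : a < π := by simp only [ha_def]; linarith
  have hb : 1 / 2 - θ₀ / π = a / (2 * π) := by
    field_simp
    rw [ha_def]
  have hbpos : 0 < 1 / 2 - θ₀ / π := by
    rw [hb]; positivity
  -- positivity and upper bound for s > 0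
  have hpos : ∀ s : ℝ, 0 < s → 0 < eta θ₀ s ∧ eta θ₀ s < 1 / 2 - θ₀ / π := by
    intro s hs
    have hsa : 0 < s * a := mul_pos hs ha
    have hsπ : 0 < s * π := mul_pos hs hπ
    have hsa' := Real.sinh_pos_iff.mpr hsa
    have hsπ' := Real.sinh_pos_iff.mpr hsπ
    have he : eta θ₀ s = Real.sinh (s * a) / (2 * Real.sinh (s * π)) := by
      rw [eta, if_neg hs.ne']
    constructor
    · rw [he]; positivity
    · rw [he, hb, div_lt_div_iff₀ (by positivity) (by positivity)]
      have hkey := lemD (mul_pos hs ha) (by nlinarith : s * a < s * π)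
      nlinarith [hkey]
  -- evenness
  have heven : ∀ s : ℝ, eta θ₀ (-s) = eta θ₀ s := by
    intro s
    rcases eq_or_ne s 0 with rfl | hs
    · norm_num
    · rw [eta, eta, if_neg (neg_ne_zero.mpr hs), if_neg hs,
        show -s * (π - 2*θ₀) = -(s * (π - 2*θ₀)) by ring,
        show -s * π = -(s * π) by ring, Real.sinh_neg, Real.sinh_neg]
      rw [mul_neg, neg_div_neg_eq]
  -- tendsto at 0 within punctured nbhd
  have hslope : ∀ c : ℝ, Tendsto (fun s => Real.sinh (s * c) / s) (𝓝[≠] (0:ℝ)) (𝓝 c) := by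
    intro c
    have hd : HasDerivAt (fun s : ℝ => Real.sinh (s * c)) (Real.cosh ((0:ℝ) * c) * (1 * c)) 0 :=
      ((hasDerivAt_id (0:ℝ)).mul_const c).sinh
    rw [hasDerivAt_iff_tendsto_slope] at hd
    simp only [zero_mul, Real.cosh_zero, one_mul] at hd
    refine hd.congr (fun s => ?_)
    rw [slope_def_field]
    simp [div_eq_mul_inv]
  have h0lim : Tendsto (eta θ₀) (𝓝[≠] (0:ℝ)) (𝓝 (1 / 2 - θ₀ / π)) := by
    have ht : Tendsto (fun s => (Real.sinh (s * a) / s) / (2 * (Real.sinh (s * π) / s)))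
        (𝓝[≠] (0:ℝ)) (𝓝 (a / (2 * π))) :=
      (hslope a).div ((hslope π).const_mul 2) (by positivity)
    rw [hb]
    refine ht.congr' ?_
    filter_upwards [self_mem_nhdsWithin] with s hs
    have hs' : s ≠ 0 := hs
    rw [eta, if_neg hs']
    field_simp
    rw [ha_def]
  -- continuity
  have hcont : Continuous (eta θ₀) := by
    rw [continuous_iff_continuousAt]
    intro s
    rcases eq_or_ne s 0 with rfl | hs
    · rw [ContinuousAt]
      have : eta θ₀ 0 = 1 / 2 - θ₀ / π := by rw [eta, if_pos rfl]
      rw [this, ← nhdsNE_sup_pure, tendsto_sup]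
      exact ⟨h0lim, by rw [tendsto_pure_left]; intro U hU; simpa [this] using mem_of_mem_nhds hU⟩
    · have hne : Real.sinh (s * π) ≠ 0 := by
        rw [Real.sinh_ne_zero]
        exact mul_ne_zero hs hπ.ne'
      have hc : ContinuousAt (fun t : ℝ => Real.sinh (t * (π - 2*θ₀)) / (2 * Real.sinh (t * π))) s := by
        apply ContinuousAt.div
        · exact (Real.continuous_sinh.comp (continuous_id.mul continuous_const)).continuousAt
        · exact (continuous_const.mul
            (Real.continuous_sinh.comp (continuous_id.mul continuous_const))).continuousAt
        · simpa using mul_ne_zero two_ne_zero hne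
      refine hc.congr ?_
      filter_upwards [isOpen_ne.mem_nhds hs] with t ht
      rw [eta, if_neg ht]
  -- derivative
  have hderiv : ∀ s : ℝ, 0 < s → DifferentiableAt ℝ (eta θ₀) s ∧ deriv (eta θ₀) s < 0 := by
    intro s hs
    have hne : Real.sinh (s * π) ≠ 0 := (Real.sinh_pos_iff.mpr (mul_pos hs hπ)).ne'
    have h1 : HasDerivAt (fun t : ℝ => Real.sinh (t * a)) (Real.cosh (s * a) * (1 * a)) s :=
      ((hasDerivAt_id s).mul_const a).sinh
    have h2 : HasDerivAt (fun t : ℝ => 2 * Real.sinh (t * π)) (2 * (Real.cosh (s * π) * (1 * π))) s :=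
      (((hasDerivAt_id s).mul_const π).sinh).const_mul 2
    have hne2 : 2 * Real.sinh (s * π) ≠ 0 := mul_ne_zero two_ne_zero hne
    have hd := h1.div h2 hne2
    have heq : (fun t : ℝ => Real.sinh (t * a) / (2 * Real.sinh (t * π))) =ᶠ[𝓝 s] eta θ₀ := by
      filter_upwards [isOpen_ne.mem_nhds hs.ne'] with t ht
      rw [eta, if_neg ht]
    have hd' : HasDerivAt (eta θ₀)
        ((Real.cosh (s * a) * (1 * a) * (2 * Real.sinh (s * π)) -
          Real.sinh (s * a) * (2 * (Real.cosh (s * π) * (1 * π)))) / (2 * Real.sinh (s * π)) ^ 2)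
        s := hd.congr_of_eventuallyEq heq.symm
    refine ⟨hd'.differentiableAt, ?_⟩
    rw [hd'.deriv]
    apply div_neg_of_neg_of_pos
    · have hkey := lemC (u := s * a) (v := s * π) (mul_pos hs ha) (by nlinarith)
      nlinarith [hkey, Real.cosh_pos (x := s * a), Real.cosh_pos (x := s * π),
        Real.sinh_pos_iff.mpr (mul_pos hs ha), Real.sinh_pos_iff.mpr (mul_pos hs hπ), hs]
    · positivity
  -- tendsto at infinity
  have htop : Tendsto (eta θ₀) atTop (𝓝 0) := by
    have hexp : Tendsto (fun s : ℝ => Real.exp (s * (a - π))) atTop (𝓝 0) := by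
      rw [Real.tendsto_exp_comp_nhds_zero]
      exact (tendsto_mul_const_atBot_of_neg (by linarith)).mpr tendsto_id
    apply tendsto_of_tendsto_of_tendsto_of_le_of_le' tendsto_const_nhds hexp
    · filter_upwards [eventually_ge_atTop (1:ℝ)] with s hs
      exact (hpos s (by linarith)).1.le
    · filter_upwards [eventually_ge_atTop (1:ℝ)] with s hs
      have hs0 : (0:ℝ) < s := by linarith
      rw [eta, if_neg hs0.ne', ← ha_def]
      have hub : Real.sinh (s * a) ≤ Real.exp (s * a) / 2 := by
        rw [Real.sinh_eq]
        have := Real.exp_pos (-(s * a))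
        linarith
      have hlb : Real.exp (s * π) / 2 ≤ 2 * Real.sinh (s * π) := by
        rw [Real.sinh_eq]
        have h4 : (4:ℝ) ≤ Real.exp (s * π) := by
          calc (4:ℝ) ≤ 1 + π := by nlinarith [Real.pi_gt_three]
          _ ≤ Real.exp π := by linarith [Real.add_one_le_exp π]
          _ ≤ Real.exp (s * π) := Real.exp_le_exp.mpr (by nlinarith)
        have h5 : Real.exp (-(s * π)) ≤ 1 := Real.exp_le_one_iff.mpr (by nlinarith)
        linarith
      calc Real.sinh (s * a) / (2 * Real.sinh (s * π))
          ≤ (Real.exp (s * a) / 2) / (Real.exp (s * π) / 2) := by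
            apply div_le_div₀ (by positivity) hub (by positivity) hlb
        _ = Real.exp (s * (a - π)) := by
            rw [show s * (a - π) = s * a - s * π by ring, Real.exp_sub]
            field_simp
  -- strict anti
  have hanti : StrictAntiOn (eta θ₀) (Ici 0) := by
    apply strictAntiOn_of_deriv_neg (convex_Ici 0) hcont.continuousOn
    intro x hx
    rw [interior_Ici] at hx
    exact (hderiv x hx).2
  -- bijection
  refine ⟨heven, hcont, hderiv, ?_, htop, hanti, ?_, hanti.injOn, ?_⟩
  · intro s hs
    rcases lt_or_gt_of_ne hs with h | h
    · rw [← heven s]; exact hpos (-s) (by linarith)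
    · exact hpos s h
  · intro s hs
    rcases eq_or_lt_of_le (mem_Ici.mp hs) with h | h
    · rw [← h]
      have : eta θ₀ 0 = 1 / 2 - θ₀ / π := by rw [eta, if_pos rfl]
      exact ⟨by rw [this]; exact hbpos, by rw [this]⟩
    · exact ⟨(hpos s h).1, (hpos s h).2.le⟩
  · intro y hy
    obtain ⟨hy1, hy2⟩ := hy
    obtain ⟨s, hs0, hsy⟩ := ((htop.eventually_lt_const hy1).and (eventually_ge_atTop (0:ℝ))).exists
    have he0 : eta θ₀ 0 = 1 / 2 - θ₀ / π := by rw [eta, if_pos rfl]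
    have hmem : y ∈ Icc (eta θ₀ s) (eta θ₀ 0) := ⟨hs0.le, by rw [he0]; exact hy2⟩
    obtain ⟨t, ht, hty⟩ := intermediate_value_Icc' hsy hcont.continuousOn hmem
    exact ⟨t, ht.1, hty⟩
end

section
/- The operator 𝕂* defined by 𝕂*(f₁, f₂) = (η·f₁, −η·f₂) is a well-defined bounded linear operator on W*, it is self-adjoint with respect to the inner product ⟨·,·⟩_{W*} (i.e. ⟨𝕂*f, g⟩_{W*} = ⟨f, 𝕂*g⟩_{W*} for all f, g ∈ W*), and its operator norm equals b = 1/2 − θ₀/π. -/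
open Real Filter Topology Set MeasureTheory
open scoped ComplexInnerProductSpace

/-- The weight `p₁`. -/
noncomputable def p1 (θ₀ : ℝ) (s : ℝ) : ℝ :=
  if s = 0 then θ₀ * (π - θ₀) / π
  else Real.sinh (s * θ₀) * Real.sinh (s * (π - θ₀)) / (s * Real.sinh (s * π))

/-- The weight `p₂`. -/
noncomputable def p2 (θ₀ : ℝ) (s : ℝ) : ℝ :=
  Real.cosh (s * θ₀) * Real.cosh (s * (π - θ₀)) / (s * Real.sinh (s * π))

/-- The measure `p₁(s) ds`. -/
noncomputable def mu1 (θ₀ : ℝ) : Measure ℝ :=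
  (volume : Measure ℝ).withDensity fun s => ENNReal.ofReal (p1 θ₀ s)

/-- The measure `p₂(s) ds`. -/
noncomputable def mu2 (θ₀ : ℝ) : Measure ℝ :=
  (volume : Measure ℝ).withDensity fun s => ENNReal.ofReal (p2 θ₀ s)

/-- The Hilbert space `W* = L²(ℝ, p₁ ds) ⊕ L²(ℝ, p₂ ds)` (ℓ²-direct sum). -/
noncomputable abbrev WStar (θ₀ : ℝ) :=
  WithLp 2 (Lp ℂ 2 (mu1 θ₀) × Lp ℂ 2 (mu2 θ₀))

/-- First component of an element of `W*`. -/
noncomputable def comp1 {θ₀ : ℝ} (f : WStar θ₀) : Lp ℂ 2 (mu1 θ₀) :=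
  (WithLp.equiv 2 (Lp ℂ 2 (mu1 θ₀) × Lp ℂ 2 (mu2 θ₀)) f).1

/-- Second component of an element of `W*`. -/
noncomputable def comp2 {θ₀ : ℝ} (f : WStar θ₀) : Lp ℂ 2 (mu2 θ₀) :=
  (WithLp.equiv 2 (Lp ℂ 2 (mu1 θ₀) × Lp ℂ 2 (mu2 θ₀)) f).2

/-- `T` acts as `𝕂*(f₁, f₂) = (η·f₁, −η·f₂)`. -/
def IsNPMult (θ₀ : ℝ) (T : WStar θ₀ →L[ℂ] WStar θ₀) : Prop :=
  ∀ f : WStar θ₀,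
    (comp1 (T f) : ℝ → ℂ) =ᵐ[mu1 θ₀] (fun s => (eta θ₀ s : ℂ) * (comp1 f : ℝ → ℂ) s) ∧
    (comp2 (T f) : ℝ → ℂ) =ᵐ[mu2 θ₀] (fun s => -(eta θ₀ s : ℂ) * (comp2 f : ℝ → ℂ) s)

/-! ### Auxiliary real-analytic inequalities -/

lemma aux_sinh_le_mul_cosh {x : ℝ} (hx : 0 ≤ x) : Real.sinh x ≤ x * Real.cosh x := by
  have h : ∀ y ∈ Set.Ici (0:ℝ), HasDerivAt (fun t => t * Real.cosh t - Real.sinh t)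
      (y * Real.sinh y) y := by
    intro y _
    have := ((hasDerivAt_id y).mul (Real.hasDerivAt_cosh y)).sub (Real.hasDerivAt_sinh y)
    exact this.congr_deriv (by simp only [id, one_mul]; ring)
  have hmono : MonotoneOn (fun t => t * Real.cosh t - Real.sinh t) (Set.Ici (0:ℝ)) := by
    apply monotoneOn_of_deriv_nonneg (convex_Ici 0)
    · exact (Continuous.sub (continuous_id.mul Real.continuous_cosh)
        Real.continuous_sinh).continuousOn
    · intro y hy
      exact (h y (interior_subset hy)).differentiableAt.differentiableWithinAt
    · intro y hy
      rw [interior_Ici] at hy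
      rw [(h y (Set.mem_Ici.2 (le_of_lt hy))).deriv]
      exact mul_nonneg hy.le (Real.sinh_nonneg_iff.mpr hy.le)
  have := hmono (Set.self_mem_Ici) hx hx
  simpa using this

lemma aux_convexOn_sinh : ConvexOn ℝ (Set.Ici (0:ℝ)) Real.sinh := by
  apply convexOn_of_deriv2_nonneg (convex_Ici 0) Real.continuous_sinh.continuousOn
  · exact Real.differentiable_sinh.differentiableOn
  · rw [Real.deriv_sinh]; exact Real.differentiable_cosh.differentiableOn
  · intro x hx
    rw [interior_Ici] at hx
    simp [Real.deriv_sinh, Real.deriv_cosh, Real.sinh_nonneg_iff.mpr (le_of_lt hx)]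

lemma aux_mul_sinh_le {a c : ℝ} (ha : 0 ≤ a) (hac : a ≤ c) (hc : 0 < c) :
    c * Real.sinh a ≤ a * Real.sinh c := by
  have hl0 : (0:ℝ) ≤ a / c := div_nonneg ha hc.le
  have hl1 : a / c ≤ 1 := (div_le_one hc).2 hac
  have h := aux_convexOn_sinh.2 (Set.self_mem_Ici) (Set.mem_Ici.2 hc.le)
    (by linarith : (0:ℝ) ≤ 1 - a / c) hl0 (by ring)
  have h2 : Real.sinh a ≤ (a / c) * Real.sinh c := by
    have : (1 - a/c) • (0:ℝ) + (a/c) • c = a := by simp [hc.ne']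
    rw [this] at h
    simpa [Real.sinh_zero, smul_eq_mul] using h
  calc c * Real.sinh a ≤ c * ((a/c) * Real.sinh c) := by
        exact mul_le_mul_of_nonneg_left h2 hc.le
    _ = a * Real.sinh c := by field_simp

/-! ### Properties of `η` -/

section Eta
variable {θ₀ : ℝ} (h0 : 0 < θ₀) (h1 : θ₀ < π / 2)

include h1 in
lemma b_pos : 0 < 1/2 - θ₀/π := by
  have hπ := Real.pi_pos
  rw [sub_pos, div_lt_div_iff₀ hπ (by norm_num)]
  linarith

lemma eta_measurable : Measurable (eta θ₀) := by
  apply Measurable.ite (measurableSet_eq_fun measurable_id measurable_const)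
  · exact measurable_const
  · exact ((Real.measurable_sinh.comp (measurable_id.mul_const _)).div
      ((Real.measurable_sinh.comp (measurable_id.mul_const _)).const_mul 2))

include h0 h1 in
lemma eta_abs_le (s : ℝ) : |eta θ₀ s| ≤ 1/2 - θ₀/π := by
  have hπ := Real.pi_pos
  have hα : 0 < π - 2*θ₀ := by linarith
  rcases eq_or_ne s 0 with rfl | hs
  · rw [eta, if_pos rfl, abs_of_nonneg (b_pos h1).le]
  · rw [eta, if_neg hs]
    set t := |s| with ht
    have htpos : 0 < t := abs_pos.2 hs
    have habs : |Real.sinh (s * (π - 2*θ₀)) / (2 * Real.sinh (s * π))|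
        = Real.sinh (t * (π - 2*θ₀)) / (2 * Real.sinh (t * π)) := by
      rw [abs_div, abs_mul, Real.abs_sinh, Real.abs_sinh, abs_mul, abs_mul,
        abs_of_nonneg hα.le, abs_of_nonneg hπ.le, abs_of_nonneg (by norm_num : (0:ℝ) ≤ 2)]
    have hgoal : |Real.sinh (s * (π - 2 * θ₀)) / (2 * Real.sinh (s * π))| ≤ 1/2 - θ₀/π := by
      rw [habs]
      have hsinhπ : 0 < Real.sinh (t * π) := Real.sinh_pos_iff.2 (by positivity)
      have key : (t*π) * Real.sinh (t * (π - 2*θ₀)) ≤ (t*(π - 2*θ₀)) * Real.sinh (t * π) :=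
        aux_mul_sinh_le (by positivity) (by nlinarith) (by positivity)
      rw [div_le_iff₀ (by positivity)]
      have h2 : 1/2 - θ₀/π = (π - 2*θ₀)/(2*π) := by field_simp
      rw [h2]
      rw [div_mul_eq_mul_div, le_div_iff₀ (by positivity)]
      nlinarith
    exact hgoal

include h1 in
lemma eta_ge {s : ℝ} (hs : 0 < s) : (1/2 - θ₀/π) / Real.cosh (π * s) ≤ eta θ₀ s := by
  have hπ := Real.pi_pos
  have hα : 0 < π - 2*θ₀ := by linarith
  rw [eta, if_neg hs.ne']
  have h2 : (1/2 - θ₀/π) / Real.cosh (π * s) = (s*(π - 2*θ₀)) / (2*(s*π*Real.cosh (s*π))) := by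
    rw [mul_comm π s]
    have hc : 0 < Real.cosh (s*π) := Real.cosh_pos _
    field_simp
  rw [h2]
  apply div_le_div₀
  · exact Real.sinh_nonneg_iff.2 (by positivity : (0:ℝ) ≤ s*(π-2*θ₀))
  · exact Real.self_le_sinh_iff.2 (by positivity)
  · positivity
  · have := aux_sinh_le_mul_cosh (x := s*π) (by positivity)
    linarith

end Eta

/-! ### Properties of `p₁` and `μ₁` -/

lemma p1_measurable (θ₀ : ℝ) : Measurable (p1 θ₀) := by
  apply Measurable.ite (measurableSet_eq_fun measurable_id measurable_const) measurable_const
  exact ((Real.measurable_sinh.comp (measurable_id.mul_const _)).mul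
      (Real.measurable_sinh.comp (measurable_id.mul_const _))).div
    (measurable_id.mul (Real.measurable_sinh.comp (measurable_id.mul_const _)))

section P1
variable {θ₀ : ℝ} (h0 : 0 < θ₀) (h1 : θ₀ < π / 2)

include h0 h1 in
lemma p1_lb {s : ℝ} (hs : 0 < s) (hs1 : s ≤ 1) :
    θ₀ * (π - θ₀) / (π * Real.cosh π) ≤ p1 θ₀ s := by
  have hπ := Real.pi_pos
  have hθπ : θ₀ < π := by linarith
  rw [p1, if_neg hs.ne']
  have hch : 0 < Real.cosh (s * π) := Real.cosh_pos _
  have hchπ : Real.cosh (s * π) ≤ Real.cosh π := by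
    rw [Real.cosh_le_cosh]
    rw [abs_of_nonneg (by positivity), abs_of_nonneg hπ.le]
    nlinarith
  have hnum : s * θ₀ * (s * (π - θ₀)) ≤ Real.sinh (s * θ₀) * Real.sinh (s * (π - θ₀)) := by
    have h1' : s * θ₀ ≤ Real.sinh (s * θ₀) := Real.self_le_sinh_iff.2 (by positivity)
    have h2' : s * (π - θ₀) ≤ Real.sinh (s * (π - θ₀)) :=
      Real.self_le_sinh_iff.2 (mul_nonneg hs.le (by linarith))
    exact mul_le_mul h1' h2' (mul_nonneg hs.le (by linarith))
      ((mul_nonneg hs.le h0.le).trans h1')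
  have hden : s * Real.sinh (s * π) ≤ s * (s * π * Real.cosh π) := by
    have hsm := aux_sinh_le_mul_cosh (x := s * π) (by positivity)
    calc s * Real.sinh (s * π) ≤ s * (s * π * Real.cosh (s * π)) :=
          mul_le_mul_of_nonneg_left hsm hs.le
      _ ≤ s * (s * π * Real.cosh π) := by
          apply mul_le_mul_of_nonneg_left _ hs.le
          exact mul_le_mul_of_nonneg_left hchπ (by positivity)
  have hden0 : 0 < s * Real.sinh (s * π) := by
    have : 0 < Real.sinh (s * π) := Real.sinh_pos_iff.2 (by positivity)
    positivity
  calc θ₀ * (π - θ₀) / (π * Real.cosh π)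
      = s * θ₀ * (s * (π - θ₀)) / (s * (s * π * Real.cosh π)) := by
        field_simp
    _ ≤ Real.sinh (s * θ₀) * Real.sinh (s * (π - θ₀)) / (s * Real.sinh (s * π)) := by
        apply div_le_div₀ _ hnum hden0 hden
        exact mul_nonneg (Real.sinh_nonneg_iff.2 (by positivity))
          (Real.sinh_nonneg_iff.2 (mul_nonneg hs.le (by linarith)))

include h0 h1 in
lemma p1_ub {s : ℝ} (hs : 0 < s) (hs1 : s ≤ 1) : p1 θ₀ s ≤ π * Real.cosh π := by
  have hπ := Real.pi_pos
  have hθπ : θ₀ < π := by linarith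
  rw [p1, if_neg hs.ne']
  have hs1' : 0 < Real.sinh (s * π) := Real.sinh_pos_iff.2 (by positivity)
  have hA : Real.sinh (s * θ₀) ≤ Real.sinh (s * π) := by
    rw [Real.sinh_le_sinh]; nlinarith
  have hB : Real.sinh (s * (π - θ₀)) ≤ s * π * Real.cosh π := by
    have h1' := aux_sinh_le_mul_cosh (x := s * (π - θ₀)) (mul_nonneg hs.le (by linarith))
    have h2' : Real.cosh (s * (π - θ₀)) ≤ Real.cosh π := by
      rw [Real.cosh_le_cosh, abs_of_nonneg (mul_nonneg hs.le (by linarith)),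
        abs_of_nonneg hπ.le]
      nlinarith
    calc Real.sinh (s * (π - θ₀)) ≤ s * (π - θ₀) * Real.cosh (s * (π - θ₀)) := h1'
      _ ≤ s * (π - θ₀) * Real.cosh π :=
          mul_le_mul_of_nonneg_left h2' (mul_nonneg hs.le (by linarith))
      _ ≤ s * π * Real.cosh π := by
          apply mul_le_mul_of_nonneg_right _ (Real.cosh_pos π).le
          nlinarith
  rw [div_le_iff₀ (by positivity)]
  have hsp : 0 ≤ Real.sinh (s * θ₀) := Real.sinh_nonneg_iff.2 (by positivity)
  have hsp2 : 0 ≤ Real.sinh (s * (π - θ₀)) :=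
    Real.sinh_nonneg_iff.2 (mul_nonneg hs.le (by linarith))
  nlinarith [mul_le_mul hA hB hsp2 hs1'.le]

include h0 h1 in
lemma mu1_Ioo_lt_top {δ : ℝ} (hδ : 0 < δ) (hδ1 : δ ≤ 1) : mu1 θ₀ (Ioo 0 δ) < ⊤ := by
  rw [mu1, withDensity_apply _ measurableSet_Ioo]
  calc ∫⁻ s in Ioo 0 δ, ENNReal.ofReal (p1 θ₀ s) ∂volume
      ≤ ∫⁻ _ in Ioo 0 δ, ENNReal.ofReal (π * Real.cosh π) ∂volume := by
        apply setLIntegral_mono measurable_const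
        intro s hs
        exact ENNReal.ofReal_le_ofReal (p1_ub h0 h1 hs.1 (hs.2.le.trans hδ1))
    _ = ENNReal.ofReal (π * Real.cosh π) * volume (Ioo 0 δ) := setLIntegral_const _ _
    _ < ⊤ := by
        rw [Real.volume_Ioo]
        exact ENNReal.mul_lt_top ENNReal.ofReal_lt_top ENNReal.ofReal_lt_top

include h0 h1 in
lemma mu1_Ioo_pos {δ : ℝ} (hδ : 0 < δ) (hδ1 : δ ≤ 1) : 0 < mu1 θ₀ (Ioo 0 δ) := by
  have hπ := Real.pi_pos
  have hθπ : θ₀ < π := by linarith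
  rw [mu1, withDensity_apply _ measurableSet_Ioo]
  have hc : 0 < θ₀ * (π - θ₀) / (π * Real.cosh π) := by
    have := Real.cosh_pos π
    have h2 : 0 < π - θ₀ := by linarith
    positivity
  calc (0:ENNReal) < ENNReal.ofReal (θ₀ * (π - θ₀) / (π * Real.cosh π)) * volume (Ioo 0 δ) := by
        rw [Real.volume_Ioo]
        apply ENNReal.mul_pos
        · simpa using hc
        · simp [hδ]
    _ = ∫⁻ _ in Ioo 0 δ, ENNReal.ofReal (θ₀ * (π - θ₀) / (π * Real.cosh π)) ∂volume :=
        (setLIntegral_const _ _).symm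
    _ ≤ ∫⁻ s in Ioo 0 δ, ENNReal.ofReal (p1 θ₀ s) ∂volume := by
        apply setLIntegral_mono (ENNReal.measurable_ofReal.comp (p1_measurable θ₀))
        intro s hs
        exact ENNReal.ofReal_le_ofReal (p1_lb h0 h1 hs.1 (hs.2.le.trans hδ1))

end P1

/-! ### A general multiplication operator on `L²` -/

section MulOp
variable {μ : Measure ℝ} {g : ℝ → ℝ} {M : ℝ}

lemma memLp_mul (hg : Measurable g) (hb : ∀ s, |g s| ≤ M) (f : Lp ℂ 2 μ) :
    MemLp (fun s => (g s : ℂ) * (f : ℝ → ℂ) s) 2 μ := by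
  apply MemLp.of_le_mul (Lp.memLp f)
    ((Complex.measurable_ofReal.comp hg).aestronglyMeasurable.mul (Lp.aestronglyMeasurable f))
  filter_upwards with s
  simp only [Pi.mul_apply, Function.comp_apply, norm_mul, Complex.norm_real,
    Real.norm_eq_abs]
  exact mul_le_mul_of_nonneg_right (hb s) (norm_nonneg _)

end MulOp

section MulOp2
variable {μ : Measure ℝ} (g : ℝ → ℝ) (M : ℝ) (hg : Measurable g) (hb : ∀ s, |g s| ≤ M)

noncomputable def mulLM : Lp ℂ 2 μ →ₗ[ℂ] Lp ℂ 2 μ where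
  toFun f := (memLp_mul hg hb f).toLp _
  map_add' f f' := by
    rw [← MemLp.toLp_add]
    refine MemLp.toLp_congr _ _ ?_
    filter_upwards [Lp.coeFn_add f f'] with s hs
    rw [hs]
    simp only [Pi.add_apply]
    ring
  map_smul' c f := by
    rw [RingHom.id_apply, ← MemLp.toLp_const_smul]
    refine MemLp.toLp_congr _ _ ?_
    filter_upwards [Lp.coeFn_smul c f] with s hs
    simp only [hs, Pi.smul_apply, smul_eq_mul]
    ring

lemma mulLM_coeFn (f : Lp ℂ 2 μ) :
    (mulLM g M hg hb f : ℝ → ℂ) =ᵐ[μ] fun s => (g s : ℂ) * (f : ℝ → ℂ) s :=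
  MemLp.coeFn_toLp (memLp_mul hg hb f)

lemma mulLM_norm_le (hM : 0 ≤ M) (f : Lp ℂ 2 μ) : ‖mulLM g M hg hb f‖ ≤ M * ‖f‖ := by
  have h1 : ‖mulLM g M hg hb f‖ = (eLpNorm (fun s => (g s : ℂ) * (f : ℝ → ℂ) s) 2 μ).toReal :=
    Lp.norm_toLp _ (memLp_mul hg hb f)
  have h2 : eLpNorm (fun s => (g s : ℂ) * (f : ℝ → ℂ) s) 2 μ
      ≤ eLpNorm (fun s => (M:ℂ) * (f : ℝ → ℂ) s) 2 μ := by
    apply eLpNorm_mono_ae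
    filter_upwards with s
    simp only [norm_mul, Complex.norm_real, Real.norm_eq_abs]
    exact mul_le_mul_of_nonneg_right ((hb s).trans (le_abs_self M)) (norm_nonneg _)
  have h3 : eLpNorm (fun s => (M:ℂ) * (f : ℝ → ℂ) s) 2 μ
      = ‖(M:ℂ)‖₊ * eLpNorm (f : ℝ → ℂ) 2 μ := by
    rw [← enorm_eq_nnnorm, ← eLpNorm_const_smul]
    rfl
  rw [h1]
  calc (eLpNorm (fun s => (g s : ℂ) * (f : ℝ → ℂ) s) 2 μ).toReal
      ≤ ((‖(M:ℂ)‖₊ : ENNReal) * eLpNorm (f : ℝ → ℂ) 2 μ).toReal := by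
        apply ENNReal.toReal_mono _ (h2.trans h3.le)
        exact ENNReal.mul_ne_top ENNReal.coe_ne_top (Lp.eLpNorm_ne_top f)
    _ = M * ‖f‖ := by
        rw [ENNReal.toReal_mul, Lp.norm_def]
        simp [abs_of_nonneg hM]

noncomputable def mulOp (hM : 0 ≤ M) : Lp ℂ 2 μ →L[ℂ] Lp ℂ 2 μ :=
  LinearMap.mkContinuous (mulLM g M hg hb) M (mulLM_norm_le g M hg hb hM)

lemma mulOp_coeFn (hM : 0 ≤ M) (f : Lp ℂ 2 μ) :
    (mulOp g M hg hb hM f : ℝ → ℂ) =ᵐ[μ] fun s => (g s : ℂ) * (f : ℝ → ℂ) s :=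
  mulLM_coeFn g M hg hb f

lemma mulOp_norm_le (hM : 0 ≤ M) (f : Lp ℂ 2 μ) : ‖mulOp g M hg hb hM f‖ ≤ M * ‖f‖ :=
  mulLM_norm_le g M hg hb hM f

lemma mulOp_symm (hM : 0 ≤ M) (u v : Lp ℂ 2 μ) :
    ⟪mulOp g M hg hb hM u, v⟫ = ⟪u, mulOp g M hg hb hM v⟫ := by
  rw [MeasureTheory.L2.inner_def, MeasureTheory.L2.inner_def]
  apply integral_congr_ae
  filter_upwards [mulOp_coeFn g M hg hb hM u, mulOp_coeFn g M hg hb hM v] with s hu hv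
  rw [hu, hv]
  simp only [RCLike.inner_apply, map_mul, Complex.conj_ofReal]
  ring

end MulOp2

set_option maxHeartbeats 2000000 in
/-- `𝕂*(f₁,f₂) = (η f₁, −η f₂)` is a well-defined bounded linear operator on
`W*`, it is self-adjoint with respect to the `W*` inner product, and its operator norm
equals `b = 1/2 − θ₀/π`. -/
theorem statement9 (θ₀ : ℝ) (h0 : 0 < θ₀) (h1 : θ₀ < π / 2) :
    ∃ T : WStar θ₀ →L[ℂ] WStar θ₀, IsNPMult θ₀ T ∧
      (∀ f g : WStar θ₀, ⟪T f, g⟫ = ⟪f, T g⟫) ∧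
      ‖T‖ = 1 / 2 - θ₀ / π := by
  set b : ℝ := 1/2 - θ₀/π with hbdef
  have hbpos : 0 < b := b_pos h1
  have hetab : ∀ s, |eta θ₀ s| ≤ b := eta_abs_le h0 h1
  have hnegb : ∀ s, |(fun s => -(eta θ₀ s)) s| ≤ b := fun s => by
    simpa [abs_neg] using hetab s
  have hnegmeas : Measurable (fun s => -(eta θ₀ s)) := (eta_measurable).neg
  set A : Lp ℂ 2 (mu1 θ₀) →L[ℂ] Lp ℂ 2 (mu1 θ₀) :=
    mulOp (eta θ₀) b eta_measurable hetab hbpos.le with hA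
  set B : Lp ℂ 2 (mu2 θ₀) →L[ℂ] Lp ℂ 2 (mu2 θ₀) :=
    mulOp (fun s => -(eta θ₀ s)) b hnegmeas hnegb hbpos.le with hB
  set e := WithLp.prodContinuousLinearEquiv 2 ℂ (Lp ℂ 2 (mu1 θ₀)) (Lp ℂ 2 (mu2 θ₀)) with he
  set T : WStar θ₀ →L[ℂ] WStar θ₀ :=
    (e.symm.toContinuousLinearMap.comp ((A.prodMap B).comp e.toContinuousLinearMap)) with hT
  have hTf1 : ∀ f : WStar θ₀, comp1 (T f) = A (comp1 f) := fun f => rfl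
  have hTf2 : ∀ f : WStar θ₀, comp2 (T f) = B (comp2 f) := fun f => rfl
  refine ⟨T, ?_, ?_, ?_⟩
  · -- IsNPMult
    intro f
    constructor
    · rw [hTf1]
      exact mulOp_coeFn _ _ _ _ _ (comp1 f)
    · rw [hTf2]
      refine (mulOp_coeFn _ _ _ _ _ (comp2 f)).trans ?_
      filter_upwards with s
      push_cast
      ring
  · -- self-adjoint
    intro f g
    have hf : ⟪T f, g⟫ = ⟪A (comp1 f), comp1 g⟫ + ⟪B (comp2 f), comp2 g⟫ := rfl
    have hg : ⟪f, T g⟫ = ⟪comp1 f, A (comp1 g)⟫ + ⟪comp2 f, B (comp2 g)⟫ := rfl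
    rw [hf, hg, mulOp_symm, mulOp_symm]
  · -- norm
    apply le_antisymm
    · -- upper bound
      apply ContinuousLinearMap.opNorm_le_bound _ hbpos.le
      intro f
      have h2 : ‖T f‖ = Real.sqrt (‖A (comp1 f)‖^2 + ‖B (comp2 f)‖^2) :=
        WithLp.prod_norm_eq_of_L2 _
      have h3 : ‖f‖ = Real.sqrt (‖comp1 f‖^2 + ‖comp2 f‖^2) := WithLp.prod_norm_eq_of_L2 _
      rw [h2, h3]
      have hA1 : ‖A (comp1 f)‖ ≤ b * ‖comp1 f‖ := mulOp_norm_le _ _ _ _ _ _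
      have hB1 : ‖B (comp2 f)‖ ≤ b * ‖comp2 f‖ := mulOp_norm_le _ _ _ _ _ _
      calc Real.sqrt (‖A (comp1 f)‖^2 + ‖B (comp2 f)‖^2)
          ≤ Real.sqrt (b^2 * (‖comp1 f‖^2 + ‖comp2 f‖^2)) := by
            apply Real.sqrt_le_sqrt
            have := sq_le_sq' (by linarith [norm_nonneg (A (comp1 f))]) hA1
            have := sq_le_sq' (by linarith [norm_nonneg (B (comp2 f))]) hB1
            nlinarith [norm_nonneg (comp1 f), norm_nonneg (comp2 f)]
        _ = b * Real.sqrt (‖comp1 f‖^2 + ‖comp2 f‖^2) := by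
            rw [Real.sqrt_mul (sq_nonneg b), Real.sqrt_sq hbpos.le]
    · -- lower bound
      have key : ∀ δ : ℝ, δ ∈ Ioo (0:ℝ) 1 → b / Real.cosh (π * δ) ≤ ‖T‖ := by
        intro δ hδ
        obtain ⟨hδ0, hδ1⟩ := hδ
        have hμpos := mu1_Ioo_pos h0 h1 hδ0 hδ1.le
        have hμtop := mu1_Ioo_lt_top h0 h1 hδ0 hδ1.le
        set f0 : Lp ℂ 2 (mu1 θ₀) :=
          indicatorConstLp 2 measurableSet_Ioo hμtop.ne (1:ℂ) with hf0
        set c : ℝ := b / Real.cosh (π * δ) with hc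
        have hcosh : 0 < Real.cosh (π * δ) := Real.cosh_pos _
        have hcpos : 0 < c := div_pos hbpos hcosh
        -- pointwise bound
        have hptwise : ∀ᵐ s ∂(mu1 θ₀),
            ‖(c:ℂ) * (f0 : ℝ → ℂ) s‖ ≤ ‖(A f0 : ℝ → ℂ) s‖ := by
          filter_upwards [mulOp_coeFn (eta θ₀) b eta_measurable hetab hbpos.le f0,
            indicatorConstLp_coeFn (μ := mu1 θ₀) (p := 2) (hs := measurableSet_Ioo)
              (hμs := hμtop.ne) (c := (1:ℂ))] with s hAs hf0s
          rw [hAs, hf0s]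
          by_cases hsmem : s ∈ Ioo (0:ℝ) δ
          · rw [Set.indicator_of_mem hsmem]
            simp only [mul_one, norm_mul, Complex.norm_real, Real.norm_eq_abs, norm_one]
            have h1s : c ≤ eta θ₀ s := by
              have hmono : Real.cosh (π * s) ≤ Real.cosh (π * δ) := by
                rw [Real.cosh_le_cosh, abs_of_nonneg (mul_nonneg Real.pi_pos.le hsmem.1.le),
                  abs_of_nonneg (mul_nonneg Real.pi_pos.le hδ0.le)]
                have := Real.pi_pos
                nlinarith [hsmem.1, hsmem.2]
              calc c ≤ b / Real.cosh (π * s) := by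
                    apply div_le_div_of_nonneg_left hbpos.le (Real.cosh_pos _) hmono
                _ ≤ eta θ₀ s := eta_ge h1 hsmem.1
            calc |c| = c := abs_of_nonneg hcpos.le
              _ ≤ eta θ₀ s := h1s
              _ ≤ |eta θ₀ s| := le_abs_self _
          · rw [Set.indicator_of_notMem hsmem]
            simp
        -- norm inequality
        have hnorm : c * ‖f0‖ ≤ ‖A f0‖ := by
          have e2 : eLpNorm (fun s => (c:ℂ) * (f0 : ℝ → ℂ) s) 2 (mu1 θ₀)
              = ‖(c:ℂ)‖₊ * eLpNorm (f0 : ℝ → ℂ) 2 (mu1 θ₀) := by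
            rw [← enorm_eq_nnnorm, ← eLpNorm_const_smul]
            rfl
          have e3 : c * ‖f0‖
              = (eLpNorm (fun s => (c:ℂ) * (f0 : ℝ → ℂ) s) 2 (mu1 θ₀)).toReal := by
            rw [e2, ENNReal.toReal_mul, Lp.norm_def]
            simp [abs_of_nonneg hcpos.le]
          rw [e3, Lp.norm_def]
          apply ENNReal.toReal_mono (Lp.eLpNorm_ne_top (A f0))
          exact eLpNorm_mono_ae hptwise
        -- the element F
        set F : WStar θ₀ := e.symm (f0, 0) with hF
        have hcomp1F : comp1 F = f0 := rfl
        have hcomp2F : comp2 F = 0 := rfl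
        have hnormF : ‖F‖ = ‖f0‖ := by
          rw [WithLp.prod_norm_eq_of_L2]
          have : F.snd = 0 := rfl
          rw [show ‖F.fst‖ = ‖f0‖ from rfl, show ‖F.snd‖ = 0 by rw [this, norm_zero]]
          simp [Real.sqrt_sq (norm_nonneg f0)]
        have hTF : ‖T F‖ = ‖A f0‖ := by
          rw [WithLp.prod_norm_eq_of_L2]
          have h1' : (T F).fst = A f0 := rfl
          have h2' : (T F).snd = B 0 := rfl
          rw [show ‖(T F).fst‖ = ‖A f0‖ from rfl,
            show ‖(T F).snd‖ = 0 by rw [h2', map_zero, norm_zero]]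
          simp [Real.sqrt_sq (norm_nonneg (A f0))]
        have hf0pos : 0 < ‖f0‖ := by
          rw [hf0, norm_indicatorConstLp (by norm_num) (by norm_num)]
          have h2' : (0:ℝ) < ((mu1 θ₀) (Ioo 0 δ)).toReal :=
            ENNReal.toReal_pos hμpos.ne' hμtop.ne
          have : (0:ℝ) < ((mu1 θ₀) (Ioo 0 δ)).toReal ^ (1 / (2:ENNReal).toReal) := by
            apply Real.rpow_pos_of_pos h2'
          simpa [measureReal_def] using this
        have hchain : c * ‖f0‖ ≤ ‖T‖ * ‖f0‖ := by
          calc c * ‖f0‖ ≤ ‖A f0‖ := hnorm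
            _ = ‖T F‖ := hTF.symm
            _ ≤ ‖T‖ * ‖F‖ := T.le_opNorm F
            _ = ‖T‖ * ‖f0‖ := by rw [hnormF]
        exact le_of_mul_le_mul_right hchain hf0pos
      -- take the limit δ → 0⁺
      have htend : Tendsto (fun δ : ℝ => b / Real.cosh (π * δ)) (𝓝[>] 0) (𝓝 b) := by
        have hc : Tendsto (fun δ : ℝ => Real.cosh (π * δ)) (𝓝 0) (𝓝 1) := by
          have : Continuous fun δ : ℝ => Real.cosh (π * δ) :=
            Real.continuous_cosh.comp (continuous_const.mul continuous_id)
          have h := this.tendsto 0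
          simpa using h
        have h2 : Tendsto (fun δ : ℝ => b / Real.cosh (π * δ)) (𝓝[>] (0:ℝ)) (𝓝 (b / 1)) :=
          Tendsto.div tendsto_const_nhds (hc.mono_left nhdsWithin_le_nhds) one_ne_zero
        simpa using h2
      exact le_of_tendsto htend
        (Filter.eventually_of_mem (Ioo_mem_nhdsGT_of_mem ⟨le_refl 0, zero_lt_one⟩) key)
end
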